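/- Let α ∈ ℝ, let p ∈ ℝ³ be nonzero, let ν be a unit vector, and set h := ⟨ν,p⟩, p̃ := p/‖p‖², ν̃ := ν − 2hp/‖p‖², h̃ := ⟨ν̃,p̃⟩. If H ∈ ℝ satisfies H = α·h/‖p‖² (the α-stationarity equation at p), then the quantity H̃ := ‖p‖²·H + 4h (the mean curvature of the inverted surface at p̃) satisfies H̃ = −(α+4)·h̃/‖p̃‖², i.e. the −(α+4)-stationarity equation holds at p̃. -/

import Mathlib

open scoped InnerProductSpace

/-- If `H = α·h/‖p‖²` (the α-stationarity equation at `p`), then the mean curvature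
`H̃ = ‖p‖²H + 4h` of the inverted surface satisfies the `−(α+4)`-stationarity equation at
`p̃ = p/‖p‖²`, i.e. `H̃ = −(α+4)·h̃/‖p̃‖²` where `h̃ = ⟨ν̃,p̃⟩` and `ν̃ = ν − 2hp/‖p‖²`. -/
theorem stationary_equation_under_inversion (α : ℝ) (p ν : EuclideanSpace ℝ (Fin 3))
    (hp : p ≠ 0) (hν : ‖ν‖ = 1)
    (h : ℝ) (hh : h = ⟪ν, p⟫_ℝ)
    (p' : EuclideanSpace ℝ (Fin 3)) (hp' : p' = (‖p‖ ^ 2)⁻¹ • p)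
    (ν' : EuclideanSpace ℝ (Fin 3)) (hν' : ν' = ν - (2 * h / ‖p‖ ^ 2) • p)
    (h' : ℝ) (hh' : h' = ⟪ν', p'⟫_ℝ)
    (H : ℝ) (hH : H = α * h / ‖p‖ ^ 2)
    (H' : ℝ) (hH' : H' = ‖p‖ ^ 2 * H + 4 * h) :
    H' = -(α + 4) * h' / ‖p'‖ ^ 2 := by
  have hn : ‖p‖ ≠ 0 := norm_ne_zero_iff.mpr hp
  have hn2 : ‖p‖ ^ 2 ≠ 0 := pow_ne_zero 2 hn
  have hpp : ⟪p, p⟫_ℝ = ‖p‖ ^ 2 := real_inner_self_eq_norm_sq p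
  have hnp' : ‖p'‖ ^ 2 = (‖p‖ ^ 2)⁻¹ := by
    rw [hp', norm_smul]
    rw [Real.norm_eq_abs, abs_inv, abs_of_nonneg (by positivity)]
    field_simp
  have hh'' : h' = -h / ‖p‖ ^ 2 := by
    rw [hh', hν', hp', inner_smul_right, inner_sub_left, real_inner_smul_left, hpp, hh]
    field_simp
    ring
  rw [hH', hH, hh'', hnp']
  field_simp
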